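/- The inverse-probability-weighted pseudo-outcome identifies the conditional treatment effect: E[A·Y/π(X) − (1−A)·Y/(1−π(X)) | σ(X)] = E[Y¹ − Y⁰ | σ(X)] P-almost surely. -/

import Mathlib

open MeasureTheory ProbabilityTheory

/-- The inverse-probability-weighted pseudo-outcome `A·Y/π(X) − (1−A)·Y/(1−π(X))`. -/
noncomputable def ipwPseudo {Ω 𝓧 : Type*} (A Y : Ω → ℝ) (X : Ω → 𝓧) (pr : 𝓧 → ℝ)
    (ω : Ω) : ℝ :=
  A ω * Y ω / pr (X ω) - (1 - A ω) * Y ω / (1 - pr (X ω))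

theorem stmt2_aux {Ω 𝓧 : Type*} {m m₂ : MeasurableSpace Ω} {m𝓧 : MeasurableSpace 𝓧}
    {mΩ : MeasurableSpace Ω} [StandardBorelSpace Ω]
    (hm : m ≤ mΩ) (hm₂ : m₂ ≤ mΩ) (hmm₂ : m ≤ m₂)
    (P : Measure Ω) [IsProbabilityMeasure P]
    (X : Ω → 𝓧) (hXm : Measurable[m] X)
    (A Y0 Y1 Y : Ω → ℝ) (hA : Measurable A) (hY0 : Measurable Y0) (hY1 : Measurable Y1)
    (hpairm₂ : Measurable[m₂] (fun ω => (Y0 ω, Y1 ω)))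
    (hgen : m₂ = MeasurableSpace.generateFrom {s | ∃ G B, MeasurableSet[m] G ∧
      MeasurableSet[MeasurableSpace.comap (fun ω => (Y0 ω, Y1 ω)) inferInstance] B ∧
      s = G ∩ B})
    (hA01 : ∀ ω, A ω = 0 ∨ A ω = 1)
    (hYdef : ∀ ω, Y ω = A ω * Y1 ω + (1 - A ω) * Y0 ω)
    (pr : 𝓧 → ℝ) (hprm : Measurable pr) (hpr : ∀ x, 0 < pr x ∧ pr x < 1)
    (hprCE : (fun ω => pr (X ω)) =ᵐ[P] P[A | m])
    (hCE : CondIndepFun m hm (fun ω => (Y0 ω, Y1 ω)) A P)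
    (hI : Integrable (fun ω => ipwPseudo A Y X pr ω) P) :
    P[fun ω => ipwPseudo A Y X pr ω | m] =ᵐ[P] P[fun ω => Y1 ω - Y0 ω | m] := by
  classical
  set pair : Ω → ℝ × ℝ := fun ω => (Y0 ω, Y1 ω) with hpairdef
  have hpairm : Measurable pair := hpairm₂.mono hm₂ le_rfl
  -- basic facts
  have hprX0 : ∀ ω, pr (X ω) ≠ 0 := fun ω => (hpr (X ω)).1.ne'
  have hprX1 : ∀ ω, (1 : ℝ) - pr (X ω) ≠ 0 := fun ω => sub_ne_zero.2 (hpr (X ω)).2.ne'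
  have hprXm : Measurable[m] fun ω => pr (X ω) := hprm.comp hXm
  have hprXmeas : Measurable fun ω => pr (X ω) := hprXm.mono hm le_rfl
  have hAint : Integrable A P := by
    refine (integrable_const (1 : ℝ)).mono' hA.aestronglyMeasurable (ae_of_all _ fun ω => ?_)
    rcases hA01 ω with h | h <;> simp [h]
  have hprXint : Integrable (fun ω => pr (X ω)) P := by
    refine (integrable_const (1 : ℝ)).mono' hprXmeas.aestronglyMeasurable
      (ae_of_all _ fun ω => ?_)
    rw [Real.norm_eq_abs, abs_of_pos (hpr (X ω)).1]
    exact (hpr (X ω)).2.le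
  set T : Set Ω := A ⁻¹' {1} with hTdef
  have hTm : MeasurableSet T := hA (measurableSet_singleton 1)
  have hTA : (P⟦T | m⟧) =ᵐ[P] fun ω => pr (X ω) := by
    have h1 : T.indicator (fun _ => (1 : ℝ)) = A := by
      funext ω
      rcases hA01 ω with h | h <;> simp [Set.indicator_apply, hTdef, h]
    have h2 : (P⟦T | m⟧) = P[A | m] := by rw [← h1]
    rw [h2]
    exact hprCE.symm
  have hCI := (condIndepFun_iff_condExp_inter_preimage_eq_mul (μ := P) hpairm hA).mp hCE
  set S : Set (Set Ω) := {s | ∃ G B, MeasurableSet[m] G ∧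
      MeasurableSet[MeasurableSpace.comap pair inferInstance] B ∧ s = G ∩ B} with hSdef
  have hSpi : IsPiSystem S := by
    rintro _ ⟨G1, B1, hG1, hB1, rfl⟩ _ ⟨G2, B2, hG2, hB2, rfl⟩ _
    refine ⟨G1 ∩ G2, B1 ∩ B2, hG1.inter hG2, hB1.inter hB2, ?_⟩
    ext ω; simp only [Set.mem_inter_iff]; tauto
  -- key set-integral identity on the π-system
  have key : ∀ t : Set (ℝ × ℝ), MeasurableSet t → ∀ G, MeasurableSet[m] G →
      ∫ ω in G ∩ pair ⁻¹' t, pr (X ω) ∂P = ∫ ω in G ∩ pair ⁻¹' t, A ω ∂P := by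
    intro t ht G hG
    set B := pair ⁻¹' t with hBdef
    have hB : MeasurableSet B := hpairm ht
    have hindT : Integrable ((B ∩ T).indicator fun _ => (1 : ℝ)) P :=
      (integrable_const 1).indicator (hB.inter hTm)
    have hindB : Integrable (B.indicator fun _ => (1 : ℝ)) P :=
      (integrable_const 1).indicator hB
    have hCI' : (P⟦B ∩ T | m⟧) =ᵐ[P] fun ω => pr (X ω) * (P⟦B | m⟧) ω := by
      have h := hCI t {1} ht (measurableSet_singleton 1)
      filter_upwards [h, hTA] with ω h1 h2
      rw [h1, h2, mul_comm]
    have hprodint : Integrable ((fun ω => pr (X ω)) * B.indicator fun _ => (1 : ℝ)) P := by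
      refine (integrable_const (1 : ℝ)).mono'
        ((hprXmeas.mul ((measurable_const (a := (1:ℝ))).indicator hB)).aestronglyMeasurable)
        (ae_of_all _ fun ω => ?_)
      rw [Pi.mul_apply, Real.norm_eq_abs, abs_mul, abs_of_pos (hpr (X ω)).1]
      by_cases hω : ω ∈ B <;>
        simp [Set.indicator_apply, hω, (hpr (X ω)).2.le]
    have hpull : P[(fun ω => pr (X ω)) * B.indicator (fun _ => (1 : ℝ)) | m]
        =ᵐ[P] (fun ω => pr (X ω)) * P[B.indicator (fun _ => (1 : ℝ)) | m] :=
      condExp_mul_of_stronglyMeasurable_left hprXm.stronglyMeasurable hprodint hindB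
    calc ∫ ω in G ∩ B, pr (X ω) ∂P
        = ∫ ω in G, B.indicator (fun ω => pr (X ω)) ω ∂P := (setIntegral_indicator hB).symm
      _ = ∫ ω in G, ((fun ω => pr (X ω)) * B.indicator fun _ => (1 : ℝ)) ω ∂P := by
          refine integral_congr_ae (ae_of_all _ fun ω => ?_)
          by_cases hω : ω ∈ B <;> simp [Set.indicator_apply, hω]
      _ = ∫ ω in G, (P[(fun ω => pr (X ω)) * B.indicator (fun _ => (1 : ℝ)) | m]) ω ∂P :=
          (setIntegral_condExp hm hprodint hG).symm
      _ = ∫ ω in G, pr (X ω) * (P[B.indicator (fun _ => (1 : ℝ)) | m]) ω ∂P :=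
          integral_congr_ae (ae_restrict_of_ae (hpull.mono fun ω h => by
            rw [h, Pi.mul_apply]))
      _ = ∫ ω in G, (P⟦B ∩ T | m⟧) ω ∂P :=
          (integral_congr_ae (ae_restrict_of_ae (hCI'.mono fun ω h => by rw [h]))).symm
      _ = ∫ ω in G, (B ∩ T).indicator (fun _ => (1 : ℝ)) ω ∂P :=
          setIntegral_condExp hm hindT hG
      _ = ∫ ω in G, B.indicator A ω ∂P := by
          refine integral_congr_ae (ae_of_all _ fun ω => ?_)
          by_cases hω : ω ∈ B <;> rcases hA01 ω with h | h <;>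
            simp [Set.indicator_apply, hω, hTdef, h]
      _ = ∫ ω in G ∩ B, A ω ∂P := setIntegral_indicator hB
  have hbase : ∀ s, MeasurableSet[m₂] s →
      ∫ ω in s, pr (X ω) ∂P = ∫ ω in s, A ω ∂P := by
    intro s hs
    refine MeasurableSpace.induction_on_inter (m := m₂)
      (C := fun u _ => ∫ ω in u, pr (X ω) ∂P = ∫ ω in u, A ω ∂P) hgen hSpi (by simp)
      ?_ ?_ ?_ s hs
    · rintro _ ⟨G, B, hG, hB, rfl⟩
      obtain ⟨t, ht, rfl⟩ := hB
      exact key t ht G hG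
    · intro u hu hCu
      have hu' : MeasurableSet u := hm₂ _ hu
      have h1 := integral_add_compl hu' hprXint
      have h2 := integral_add_compl hu' hAint
      have htot : ∫ ω, pr (X ω) ∂P = ∫ ω, A ω ∂P :=
        (integral_congr_ae hprCE).trans (integral_condExp hm)
      linarith
    · intro g hdisj hmeas hCg
      have hg' : ∀ i, MeasurableSet (g i) := fun i => hm₂ _ (hmeas i)
      rw [integral_iUnion hg' hdisj hprXint.integrableOn,
        integral_iUnion hg' hdisj hAint.integrableOn]
      exact tsum_congr hCg
  -- E[A | m₂] = pr ∘ X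
  have hprXm₂ : Measurable[m₂] fun ω => pr (X ω) := hprXm.mono hmm₂ le_rfl
  have hA2 : (fun ω => pr (X ω)) =ᵐ[P] P[A | m₂] :=
    ae_eq_condExp_of_forall_setIntegral_eq hm₂ hAint
      (fun s _ _ => hprXint.integrableOn) (fun s hs _ => hbase s hs)
      hprXm₂.stronglyMeasurable.aestronglyMeasurable
  -- measurability w.r.t. m₂
  have hY0m₂ : Measurable[m₂] Y0 := measurable_fst.comp hpairm₂
  have hY1m₂ : Measurable[m₂] Y1 := measurable_snd.comp hpairm₂
  set f1 : Ω → ℝ := fun ω => Y1 ω / pr (X ω) with hf1def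
  set f0 : Ω → ℝ := fun ω => Y0 ω / (1 - pr (X ω)) with hf0def
  have hf1m₂ : StronglyMeasurable[m₂] f1 := (hY1m₂.div hprXm₂).stronglyMeasurable
  have hf0m₂ : StronglyMeasurable[m₂] f0 :=
    (hY0m₂.div (measurable_const.sub hprXm₂)).stronglyMeasurable
  have hsplit : (fun ω => ipwPseudo A Y X pr ω)
      = f1 * A - f0 * ((fun _ => (1 : ℝ)) - A) := by
    funext ω
    rcases hA01 ω with h | h <;>
      simp [ipwPseudo, hYdef ω, h, hf1def, hf0def] <;> ring
  -- integrability of the two pieces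
  have hint1 : Integrable (f1 * A) P := by
    refine hI.abs.mono' ((hY1.div hprXmeas).mul hA).aestronglyMeasurable
      (ae_of_all _ fun ω => ?_)
    have hω := congrFun hsplit ω
    rcases hA01 ω with h | h
    · rw [Pi.mul_apply, h, mul_zero]
      simp [abs_nonneg]
    · rw [Real.norm_eq_abs, Pi.mul_apply, h, mul_one, hω, Pi.sub_apply, Pi.mul_apply,
        Pi.mul_apply, Pi.sub_apply, h]
      simp
  have hint0 : Integrable (f0 * ((fun _ => (1 : ℝ)) - A)) P := by
    refine hI.abs.mono' ((hY0.div (measurable_const.sub hprXmeas)).mul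
      (measurable_const.sub hA)).aestronglyMeasurable (ae_of_all _ fun ω => ?_)
    have hω := congrFun hsplit ω
    rcases hA01 ω with h | h
    · rw [Real.norm_eq_abs, Pi.mul_apply, Pi.sub_apply, h, sub_zero, mul_one, hω,
        Pi.sub_apply, Pi.mul_apply, Pi.mul_apply, Pi.sub_apply, h]
      simp [abs_sub_comm]
    · rw [Pi.mul_apply, Pi.sub_apply, h, sub_self, mul_zero]
      simp [abs_nonneg]
  -- conditional expectations under m₂
  have hpull1 : P[f1 * A | m₂] =ᵐ[P] f1 * P[A | m₂] :=
    condExp_mul_of_stronglyMeasurable_left hf1m₂ hint1 hAint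
  have hY1eq : P[f1 * A | m₂] =ᵐ[P] Y1 := by
    filter_upwards [hpull1, hA2] with ω h1 h2
    rw [h1, Pi.mul_apply, ← h2, hf1def]
    exact div_mul_cancel₀ _ (hprX0 ω)
  have hA2' : P[(fun _ => (1 : ℝ)) - A | m₂] =ᵐ[P] fun ω => 1 - pr (X ω) := by
    have hsub := condExp_sub (μ := P) (m := m₂) (integrable_const (1 : ℝ)) hAint
    filter_upwards [hsub, hA2] with ω h1 h2
    rw [h1, Pi.sub_apply, condExp_const hm₂, ← h2]
  have hpull0 : P[f0 * ((fun _ => (1 : ℝ)) - A) | m₂]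
      =ᵐ[P] f0 * P[(fun _ => (1 : ℝ)) - A | m₂] :=
    condExp_mul_of_stronglyMeasurable_left hf0m₂ hint0 ((integrable_const 1).sub hAint)
  have hY0eq : P[f0 * ((fun _ => (1 : ℝ)) - A) | m₂] =ᵐ[P] Y0 := by
    filter_upwards [hpull0, hA2'] with ω h1 h2
    rw [h1, Pi.mul_apply, h2, hf0def]
    exact div_mul_cancel₀ _ (hprX1 ω)
  have hY1int : Integrable Y1 P := integrable_condExp.congr hY1eq
  have hY0int : Integrable Y0 P := integrable_condExp.congr hY0eq
  -- tower property
  have h1m : P[f1 * A | m] =ᵐ[P] P[Y1 | m] :=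
    (condExp_condExp_of_le hmm₂ hm₂).symm.trans (condExp_congr_ae hY1eq)
  have h0m : P[f0 * ((fun _ => (1 : ℝ)) - A) | m] =ᵐ[P] P[Y0 | m] :=
    (condExp_condExp_of_le hmm₂ hm₂).symm.trans (condExp_congr_ae hY0eq)
  -- assemble
  calc P[fun ω => ipwPseudo A Y X pr ω | m]
      = P[f1 * A - f0 * ((fun _ => (1 : ℝ)) - A) | m] := by rw [hsplit]
    _ =ᵐ[P] P[f1 * A | m] - P[f0 * ((fun _ => (1 : ℝ)) - A) | m] := condExp_sub hint1 hint0 m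
    _ =ᵐ[P] P[Y1 | m] - P[Y0 | m] := by
        filter_upwards [h1m, h0m] with ω e1 e2
        rw [Pi.sub_apply, Pi.sub_apply, e1, e2]
    _ =ᵐ[P] P[fun ω => Y1 ω - Y0 ω | m] := (condExp_sub hY1int hY0int m).symm

/-- the IPW pseudo-outcome identifies the conditional treatment effect:
`E[A·Y/π(X) − (1−A)·Y/(1−π(X)) | σ(X)] = E[Y¹ − Y⁰ | σ(X)]` a.s. -/
theorem stmt2 {Ω 𝓧 : Type*} [MeasurableSpace Ω] [StandardBorelSpace Ω]
    [MeasurableSpace 𝓧]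
    (P : Measure Ω) [IsProbabilityMeasure P]
    (X : Ω → 𝓧) (hX : Measurable X)
    (A Y0 Y1 Y : Ω → ℝ) (hA : Measurable A) (hY0 : Measurable Y0) (hY1 : Measurable Y1)
    (hA01 : ∀ ω, A ω = 0 ∨ A ω = 1)
    (hYdef : ∀ ω, Y ω = A ω * Y1 ω + (1 - A ω) * Y0 ω)
    (pr : 𝓧 → ℝ) (hprm : Measurable pr) (hpr : ∀ x, 0 < pr x ∧ pr x < 1)
    (hprCE : (fun ω => pr (X ω)) =ᵐ[P] P[A | MeasurableSpace.comap X inferInstance])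
    (hCE : CondIndepFun (MeasurableSpace.comap X inferInstance) hX.comap_le
      (fun ω => (Y0 ω, Y1 ω)) A P)
    (hI : Integrable (fun ω => ipwPseudo A Y X pr ω) P)
    (hI' : Integrable (fun ω => Y1 ω - Y0 ω) P) :
    P[fun ω => ipwPseudo A Y X pr ω | MeasurableSpace.comap X inferInstance]
      =ᵐ[P] P[fun ω => Y1 ω - Y0 ω | MeasurableSpace.comap X inferInstance] := by
  have hpairm : Measurable (fun ω => (Y0 ω, Y1 ω)) := hY0.prodMk hY1
  refine stmt2_aux (m₂ := MeasurableSpace.comap X inferInstance ⊔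
      MeasurableSpace.comap (fun ω => (Y0 ω, Y1 ω)) inferInstance)
    hX.comap_le (sup_le hX.comap_le hpairm.comap_le) le_sup_left P X
    (measurable_iff_comap_le.mpr le_rfl) A Y0 Y1 Y hA hY0 hY1
    (measurable_iff_comap_le.mpr le_sup_right) ?_ hA01 hYdef pr hprm hpr hprCE hCE hI
  apply le_antisymm
  · refine sup_le ?_ ?_
    · intro s hs
      exact MeasurableSpace.measurableSet_generateFrom
        ⟨s, Set.univ, hs, MeasurableSet.univ, (Set.inter_univ s).symm⟩
    · intro s hs
      exact MeasurableSpace.measurableSet_generateFrom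
        ⟨Set.univ, s, MeasurableSet.univ, hs, (Set.univ_inter s).symm⟩
  · rw [MeasurableSpace.generateFrom_le_iff]
    rintro _ ⟨G, B, hG, hB, rfl⟩
    simp only [Set.mem_setOf_eq]
    have hle1 : (MeasurableSpace.comap X inferInstance : MeasurableSpace Ω) ≤
        MeasurableSpace.comap X inferInstance ⊔
          MeasurableSpace.comap (fun ω => (Y0 ω, Y1 ω)) inferInstance := le_sup_left
    have hle2 : (MeasurableSpace.comap (fun ω => (Y0 ω, Y1 ω)) inferInstance :
        MeasurableSpace Ω) ≤ MeasurableSpace.comap X inferInstance ⊔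
          MeasurableSpace.comap (fun ω => (Y0 ω, Y1 ω)) inferInstance := le_sup_right
    exact MeasurableSet.inter (hle1 G hG) (hle2 B hB)
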